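/- There exists a set E ⊆ ℂ^n of Lebesgue measure zero such that for all g ∈ ℂ^n ∖ E, the map x ↦ (|V_g x(λ)|²)_{λ∈(ℤ_n)²} is injective modulo global phase, i.e., the Gabor system (π(λ)g)_{λ∈(ℤ_n)²} allows phase retrieval. -/

import Mathlib

open scoped Real ComplexConjugate BigOperators

/-- The character `m ↦ e^{2πi m/N}` on `ℤ_N`. -/
noncomputable def zchar (N : ℕ) [NeZero N] (m : ZMod N) : ℂ :=
  Complex.exp (2 * π * Complex.I * (m.val : ℝ) / N)

/-- Circular translation `(T_k x)_j = x_{j-k}` on `ℂ^N`. -/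
def tshift {N : ℕ} [NeZero N] (k : ZMod N) (x : ZMod N → ℂ) : ZMod N → ℂ :=
  fun j => x (j - k)

/-- Modulation `(M_l x)_j = e^{2πi jl/N} x_j` on `ℂ^N`. -/
noncomputable def mshift {N : ℕ} [NeZero N] (l : ZMod N) (x : ZMod N → ℂ) : ZMod N → ℂ :=
  fun j => zchar N (j * l) * x j

/-- Time-frequency shift `π(k,l) = M_l T_k`. -/
noncomputable def tfshift {N : ℕ} [NeZero N] (p : ZMod N × ZMod N)
    (x : ZMod N → ℂ) : ZMod N → ℂ :=
  mshift p.2 (tshift p.1 x)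

/-- The discrete short-time Fourier transform `V_g x(λ) = ⟨x, π(λ)g⟩`. -/
noncomputable def dstft {N : ℕ} [NeZero N] (g x : ZMod N → ℂ)
    (p : ZMod N × ZMod N) : ℂ :=
  ∑ n : ZMod N, x n * conj (tfshift p g n)

section zchar
variable (N : ℕ) [NeZero N]

lemma zeta_pow_N : Complex.exp (2 * π * Complex.I / N) ^ N = 1 := by
  rw [← Complex.exp_nat_mul]
  have hN : (N : ℂ) ≠ 0 := Nat.cast_ne_zero.mpr (NeZero.ne N)
  rw [show (N : ℂ) * (2 * π * Complex.I / N) = 2 * π * Complex.I by field_simp]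
  exact Complex.exp_two_pi_mul_I

lemma zchar_eq (m : ZMod N) : zchar N m = Complex.exp (2 * π * Complex.I / N) ^ m.val := by
  rw [zchar, ← Complex.exp_nat_mul]
  congr 1
  push_cast
  ring

lemma zeta_pow_mod (k : ℕ) :
    Complex.exp (2 * π * Complex.I / N) ^ (k % N) = Complex.exp (2 * π * Complex.I / N) ^ k := by
  conv_rhs => rw [← Nat.div_add_mod k N]
  rw [pow_add, pow_mul, zeta_pow_N, one_pow, one_mul]

lemma zchar_zero : zchar N 0 = 1 := by simp [zchar]

lemma zchar_add (a b : ZMod N) : zchar N (a + b) = zchar N a * zchar N b := by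
  rw [zchar_eq, zchar_eq, zchar_eq, ZMod.val_add, zeta_pow_mod, pow_add]

lemma zchar_ne_one {m : ZMod N} (hm : m ≠ 0) : zchar N m ≠ 1 := by
  intro h
  rw [zchar_eq] at h
  have hprim := Complex.isPrimitiveRoot_exp N (NeZero.ne N)
  have hdvd : N ∣ m.val := hprim.dvd_of_pow_eq_one _ h
  have h1 : 0 < m.val := Nat.pos_of_ne_zero (fun h0 => hm ((ZMod.val_eq_zero m).mp h0))
  have h2' : m.val < N := ZMod.val_lt m
  exact absurd (Nat.le_of_dvd h1 hdvd) (by omega)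

lemma conj_zchar (m : ZMod N) : conj (zchar N m) = zchar N (-m) := by
  have h1 : zchar N m * zchar N (-m) = 1 := by rw [← zchar_add]; simp [zchar_zero]
  have h2 : conj (zchar N m) * zchar N m = 1 := by
    rw [zchar, ← Complex.exp_conj, ← Complex.exp_add]
    rw [show (starRingEnd ℂ) (2 * π * Complex.I * (m.val:ℝ) / N) + 2 * π * Complex.I * (m.val:ℝ) / N = 0 by
      simp [map_div₀, map_mul, Complex.conj_I, map_ofNat]; ring]
    exact Complex.exp_zero
  calc conj (zchar N m) = conj (zchar N m) * (zchar N m * zchar N (-m)) := by rw [h1, mul_one]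
    _ = (conj (zchar N m) * zchar N m) * zchar N (-m) := by ring
    _ = zchar N (-m) := by rw [h2, one_mul]

lemma sum_zchar (m : ZMod N) :
    ∑ j : ZMod N, zchar N (j * m) = if m = 0 then (N : ℂ) else 0 := by
  split_ifs with h
  · subst h; simp [zchar_zero, ZMod.card]
  · have key : zchar N m * ∑ j : ZMod N, zchar N (j * m) = ∑ j : ZMod N, zchar N (j * m) := by
      rw [Finset.mul_sum]
      have h1 : ∀ j : ZMod N, zchar N m * zchar N (j * m) = zchar N ((j + 1) * m) := by
        intro j; rw [← zchar_add]; congr 1; ring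
      simp_rw [h1]
      exact Fintype.sum_equiv (Equiv.addRight 1) _ _ (fun j => rfl)
    have h0 := sub_eq_zero.mpr key
    have h0' : (zchar N m - 1) * ∑ j : ZMod N, zchar N (j * m) = 0 := by linear_combination h0
    rcases mul_eq_zero.mp h0' with h1 | h1
    · exact absurd (sub_eq_zero.mp h1) (zchar_ne_one N h)
    · exact h1

end zchar

section core
variable (N : ℕ) [NeZero N]

/-- Windowed autocorrelation-type transform. -/
noncomputable def Afun (x : ZMod N → ℂ) (a b : ZMod N) : ℂ :=
  ∑ m : ZMod N, x (m + b) * conj (x m) * zchar N (m * a)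

/-- Twisted autocorrelation of the window. -/
noncomputable def Cfun (g : ZMod N → ℂ) (a b : ZMod N) : ℂ :=
  ∑ j : ZMod N, g j * conj (g (j + b)) * zchar N (-(j * a))

lemma step1 (g x : ZMod N → ℂ) (k b : ZMod N) :
    ∑ l : ZMod N, (dstft g x (k, l) * conj (dstft g x (k, l))) * zchar N (l * b)
      = (N : ℂ) * ∑ t : ZMod N, x (t + b) * conj (x t) * (g (t - k) * conj (g (t + b - k))) := by
  have hterm : ∀ l : ZMod N, (dstft g x (k, l) * conj (dstft g x (k, l))) * zchar N (l * b)
      = ∑ s : ZMod N, ∑ t : ZMod N,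
          (x s * conj (x t) * conj (g (s - k)) * g (t - k)) * zchar N (l * (t + b - s)) := by
    intro l
    rw [dstft]
    simp only [tfshift, mshift, tshift, map_sum, map_mul, Complex.conj_conj, conj_zchar]
    rw [Finset.sum_mul_sum, Finset.sum_mul]
    refine Finset.sum_congr rfl fun s _ => ?_
    rw [Finset.sum_mul]
    refine Finset.sum_congr rfl fun t _ => ?_
    rw [show l * (t + b - s) = -(s * l) + (t * l + l * b) by ring, zchar_add, zchar_add]
    ring_nf
  calc ∑ l : ZMod N, (dstft g x (k, l) * conj (dstft g x (k, l))) * zchar N (l * b)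
      = ∑ l : ZMod N, ∑ s : ZMod N, ∑ t : ZMod N,
          (x s * conj (x t) * conj (g (s - k)) * g (t - k)) * zchar N (l * (t + b - s)) :=
        Finset.sum_congr rfl fun l _ => hterm l
    _ = ∑ s : ZMod N, ∑ t : ZMod N, ∑ l : ZMod N,
          (x s * conj (x t) * conj (g (s - k)) * g (t - k)) * zchar N (l * (t + b - s)) := by
        rw [Finset.sum_comm]
        exact Finset.sum_congr rfl fun s _ => Finset.sum_comm
    _ = ∑ s : ZMod N, ∑ t : ZMod N,
          (x s * conj (x t) * conj (g (s - k)) * g (t - k)) *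
            (if t + b - s = 0 then (N : ℂ) else 0) := by
        refine Finset.sum_congr rfl fun s _ => Finset.sum_congr rfl fun t _ => ?_
        rw [← Finset.mul_sum, sum_zchar]
    _ = ∑ t : ZMod N, ∑ s : ZMod N,
          (if s = t + b then (x s * conj (x t) * conj (g (s - k)) * g (t - k)) * (N:ℂ) else 0) := by
        rw [Finset.sum_comm]
        refine Finset.sum_congr rfl fun t _ => Finset.sum_congr rfl fun s _ => ?_
        rcases eq_or_ne s (t + b) with h | h
        · simp [h]
        · simp [sub_eq_zero, h, Ne.symm h]
    _ = ∑ t : ZMod N,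
          (x (t + b) * conj (x t) * conj (g (t + b - k)) * g (t - k)) * (N:ℂ) := by
        refine Finset.sum_congr rfl fun t _ => ?_
        rw [Finset.sum_ite_eq' Finset.univ (t + b)
          (fun s => (x s * conj (x t) * conj (g (s - k)) * g (t - k)) * (N:ℂ))]
        simp
    _ = (N : ℂ) * ∑ t : ZMod N, x (t + b) * conj (x t) * (g (t - k) * conj (g (t + b - k))) := by
        rw [Finset.mul_sum]
        exact Finset.sum_congr rfl fun t _ => by ring

lemma step2 (g x : ZMod N → ℂ) (a b : ZMod N) :
    ∑ k : ZMod N,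
        (∑ t : ZMod N, x (t + b) * conj (x t) * (g (t - k) * conj (g (t + b - k)))) * zchar N (k * a)
      = Afun N x a b * Cfun N g a b := by
  calc ∑ k : ZMod N,
        (∑ t : ZMod N, x (t + b) * conj (x t) * (g (t - k) * conj (g (t + b - k)))) * zchar N (k * a)
      = ∑ k : ZMod N, ∑ t : ZMod N,
          x (t + b) * conj (x t) * (g (t - k) * conj (g (t + b - k))) * zchar N (k * a) := by
        exact Finset.sum_congr rfl fun k _ => Finset.sum_mul _ _ _
    _ = ∑ t : ZMod N, ∑ k : ZMod N,
          x (t + b) * conj (x t) * (g (t - k) * conj (g (t + b - k))) * zchar N (k * a) := by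
        exact Finset.sum_comm
    _ = ∑ t : ZMod N, (x (t + b) * conj (x t) * zchar N (t * a)) *
          ∑ j : ZMod N, g j * conj (g (j + b)) * zchar N (-(j * a)) := by
        refine Finset.sum_congr rfl fun t _ => ?_
        rw [Finset.mul_sum]
        refine Fintype.sum_equiv (Equiv.subLeft t) _ _ fun j => ?_
        simp only [Equiv.subLeft_apply]
        rw [show t - j + b = t + b - j by ring,
          show j * a = t * a + -((t - j) * a) by ring, zchar_add]
        ring
    _ = Afun N x a b * Cfun N g a b := by
        rw [Afun, Cfun, ← Finset.sum_mul]

lemma key (g x : ZMod N → ℂ) (a b : ZMod N) :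
    ∑ p : ZMod N × ZMod N,
        (dstft g x p * conj (dstft g x p)) * (zchar N (p.2 * b) * zchar N (p.1 * a))
      = (N : ℂ) * (Afun N x a b * Cfun N g a b) := by
  rw [Fintype.sum_prod_type]
  have h1 : ∀ k : ZMod N,
      ∑ l : ZMod N, (dstft g x (k, l) * conj (dstft g x (k, l))) *
          (zchar N (l * b) * zchar N (k * a))
        = ((N : ℂ) * ∑ t : ZMod N, x (t + b) * conj (x t) *
            (g (t - k) * conj (g (t + b - k)))) * zchar N (k * a) := by
    intro k
    rw [← step1]
    rw [Finset.sum_mul]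
    exact Finset.sum_congr rfl fun l _ => by ring
  calc ∑ k : ZMod N, ∑ l : ZMod N, (dstft g x (k, l) * conj (dstft g x (k, l))) *
          (zchar N (l * b) * zchar N (k * a))
      = ∑ k : ZMod N, ((N : ℂ) * ∑ t : ZMod N, x (t + b) * conj (x t) *
            (g (t - k) * conj (g (t + b - k)))) * zchar N (k * a) :=
        Finset.sum_congr rfl fun k _ => h1 k
    _ = (N : ℂ) * ∑ k : ZMod N, (∑ t : ZMod N, x (t + b) * conj (x t) *
            (g (t - k) * conj (g (t + b - k)))) * zchar N (k * a) := by
        rw [Finset.mul_sum]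
        exact Finset.sum_congr rfl fun k _ => by ring
    _ = (N : ℂ) * (Afun N x a b * Cfun N g a b) := by rw [step2]

lemma Afun_invert (x : ZMod N → ℂ) (p q : ZMod N) :
    ∑ a : ZMod N, Afun N x a (p - q) * zchar N (-(a * q)) = (N : ℂ) * (x p * conj (x q)) := by
  calc ∑ a : ZMod N, Afun N x a (p - q) * zchar N (-(a * q))
      = ∑ a : ZMod N, ∑ m : ZMod N,
          x (m + (p - q)) * conj (x m) * zchar N (a * (m - q)) := by
        refine Finset.sum_congr rfl fun a _ => ?_
        rw [Afun, Finset.sum_mul]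
        refine Finset.sum_congr rfl fun m _ => ?_
        rw [show a * (m - q) = m * a + -(a * q) by ring, zchar_add]
        ring
    _ = ∑ m : ZMod N, ∑ a : ZMod N,
          x (m + (p - q)) * conj (x m) * zchar N (a * (m - q)) := Finset.sum_comm
    _ = ∑ m : ZMod N, (if m = q then x (m + (p - q)) * conj (x m) * (N:ℂ) else 0) := by
        refine Finset.sum_congr rfl fun m _ => ?_
        rw [← Finset.mul_sum]
        rw [show (∑ a : ZMod N, zchar N (a * (m - q))) = if m - q = 0 then (N:ℂ) else 0 from
          sum_zchar N (m - q)]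
        rcases eq_or_ne m q with h | h
        · simp [h]
        · simp [sub_eq_zero, h, Ne.symm h]
    _ = (N : ℂ) * (x p * conj (x q)) := by
        rw [Finset.sum_ite_eq' Finset.univ q
          (fun m => x (m + (p - q)) * conj (x m) * (N:ℂ))]
        rw [show q + (p - q) = p by ring]
        simp
        ring

end core

section pr
variable (N : ℕ) [NeZero N]

lemma rank_one_phase (x y : ZMod N → ℂ)
    (hM : ∀ p q : ZMod N, x p * conj (x q) = y p * conj (y q)) :
    ∃ θ : ℝ, y = fun j => Complex.exp (θ * Complex.I) * x j := by
  by_cases hx : ∀ p, x p = 0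
  · refine ⟨0, funext fun j => ?_⟩
    have h0 := hM j j
    rw [hx j] at h0
    simp only [zero_mul] at h0
    have : y j = 0 := by
      have := h0.symm
      rw [Complex.mul_conj] at this
      exact_mod_cast Complex.normSq_eq_zero.mp (by exact_mod_cast this)
    simp [this, hx j]
  · push_neg at hx
    obtain ⟨q, hq⟩ := hx
    have hyq : y q ≠ 0 := by
      intro h0
      have := hM q q
      rw [h0] at this
      simp only [zero_mul] at this
      rw [Complex.mul_conj] at this
      exact hq (Complex.normSq_eq_zero.mp (by exact_mod_cast this))
    have habs : ‖y q / x q‖ = 1 := by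
      have := hM q q
      rw [Complex.mul_conj, Complex.mul_conj] at this
      have h2 : Complex.normSq (x q) = Complex.normSq (y q) := by exact_mod_cast this
      rw [norm_div]
      have : ‖x q‖ = ‖y q‖ := by
        have := congrArg Real.sqrt h2
        rwa [← Complex.norm_def, ← Complex.norm_def] at this
      rw [← this, div_self (by simpa using hq)]
    refine ⟨(y q / x q).arg, funext fun p => ?_⟩
    have hexp : Complex.exp (((y q / x q).arg : ℝ) * Complex.I) = y q / x q := by
      have := Complex.norm_mul_exp_arg_mul_I (y q / x q)
      rwa [habs, Complex.ofReal_one, one_mul] at this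
    rw [hexp]
    -- goal : y p = y q / x q * x p
    have key1 : x p * y q = y p * x q := by
      have h1 := hM p q
      have h2 := hM q q
      have hcx : conj (x q) ≠ 0 := by simpa using hq
      apply mul_right_cancel₀ hcx
      calc x p * y q * conj (x q) = (x p * conj (x q)) * y q := by ring
        _ = (y p * conj (y q)) * y q := by rw [h1]
        _ = y p * (y q * conj (y q)) := by ring
        _ = y p * (x q * conj (x q)) := by rw [← h2]
        _ = y p * x q * conj (x q) := by ring
    field_simp
    linear_combination key1.symm

lemma good_window_pr (g : ZMod N → ℂ) (hg : ∀ a b : ZMod N, Cfun N g a b ≠ 0)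
    (x y : ZMod N → ℂ)
    (h : ∀ p : ZMod N × ZMod N, ‖dstft g x p‖ ^ 2 = ‖dstft g y p‖ ^ 2) :
    ∃ θ : ℝ, y = fun j => Complex.exp (θ * Complex.I) * x j := by
  have hC : ∀ p, dstft g x p * conj (dstft g x p) = dstft g y p * conj (dstft g y p) := by
    intro p
    rw [Complex.mul_conj, Complex.mul_conj]
    have : Complex.normSq (dstft g x p) = Complex.normSq (dstft g y p) := by
      rw [Complex.normSq_eq_norm_sq, Complex.normSq_eq_norm_sq]
      exact h p
    exact_mod_cast this
  have hN : (N : ℂ) ≠ 0 := Nat.cast_ne_zero.mpr (NeZero.ne N)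
  have hA : ∀ a b : ZMod N, Afun N x a b = Afun N y a b := by
    intro a b
    have h1 := key N g x a b
    have h2 := key N g y a b
    have h3 : (N : ℂ) * (Afun N x a b * Cfun N g a b)
        = (N : ℂ) * (Afun N y a b * Cfun N g a b) := by
      rw [← h1, ← h2]
      exact Finset.sum_congr rfl fun p _ => by rw [hC p]
    exact mul_right_cancel₀ (hg a b) (mul_left_cancel₀ hN h3)
  have hM : ∀ p q : ZMod N, x p * conj (x q) = y p * conj (y q) := by
    intro p q
    have h1 := Afun_invert N x p q
    have h2 := Afun_invert N y p q
    have h3 : (N : ℂ) * (x p * conj (x q)) = (N : ℂ) * (y p * conj (y q)) := by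
      rw [← h1, ← h2]
      exact Finset.sum_congr rfl fun a _ => by rw [hA]
    exact mul_left_cancel₀ hN h3
  exact rank_one_phase N x y hM

end pr

open MeasureTheory

section meas

/-- Fubini-type slicing: a measurable set all of whose one-coordinate slices are null is null. -/
lemma null_of_null_slices {ι : Type*} [Fintype ι] [DecidableEq ι] (i₀ : ι)
    {S : Set (ι → ℂ)} (hS : MeasurableSet S)
    (h : ∀ g : ι → ℂ, volume {z : ℂ | Function.update g i₀ z ∈ S} = 0) :
    volume S = 0 := by
  have hm : Measurable (S.indicator (fun _ => (1 : ENNReal))) := measurable_const.indicator hS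
  have h0 : (volume : Measure (ι → ℂ)) S = ∫⁻ g, S.indicator 1 g := (lintegral_indicator_one hS).symm
  rw [h0, volume_pi, lintegral_eq_lmarginal_univ (fun _ => 0),
    lmarginal_erase' (μ := fun _ : ι => (volume : Measure ℂ)) (S.indicator 1) hm
      (Finset.mem_univ i₀)]
  have hzero : (fun (g : ι → ℂ) => ∫⁻ z : ℂ, S.indicator (1 : (ι → ℂ) → ENNReal)
      (Function.update g i₀ z)) = fun _ => 0 := by
    funext g
    have hmeas : MeasurableSet {z : ℂ | Function.update g i₀ z ∈ S} := (measurable_update g) hS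
    calc ∫⁻ z : ℂ, S.indicator 1 (Function.update g i₀ z)
        = ∫⁻ z : ℂ, ({z : ℂ | Function.update g i₀ z ∈ S}).indicator 1 z :=
          lintegral_congr fun z => rfl
      _ = volume {z : ℂ | Function.update g i₀ z ∈ S} := lintegral_indicator_one hmeas
      _ = 0 := h g
  rw [hzero]
  simp [MeasureTheory.lmarginal]

/-- The solution set of a nondegenerate real-affine equation on `ℂ` is null. -/
lemma null_linear_slice (α β d : ℂ) (hα : α ≠ 0) :
    volume {z : ℂ | α * z + β * conj z + d = 0} = 0 := by
  classical
  let L : ℂ →ₗ[ℝ] ℂ :=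
    { toFun := fun z => α * z + β * conj z
      map_add' := by intro u v; simp only [map_add]; ring
      map_smul' := by
        intro r z
        simp only [Complex.real_smul, map_mul, Complex.conj_ofReal, RingHom.id_apply]
        ring }
  have hL : ∀ z, L z = α * z + β * conj z := fun z => rfl
  by_cases hne : Set.Nonempty {z : ℂ | α * z + β * conj z + d = 0}
  · obtain ⟨z₀, hz₀⟩ := hne
    have hz₀' : α * z₀ + β * conj z₀ + d = 0 := hz₀
    have hset : {z : ℂ | α * z + β * conj z + d = 0}
        = (fun z => -z₀ + z) ⁻¹' ((LinearMap.ker L : Submodule ℝ ℂ) : Set ℂ) := by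
      ext z
      simp only [Set.mem_setOf_eq, Set.mem_preimage, SetLike.mem_coe, LinearMap.mem_ker, hL,
        map_add, map_neg]
      constructor
      · intro hz
        linear_combination hz - hz₀'
      · intro hz
        linear_combination hz + hz₀'
    rw [hset, measure_preimage_add]
    apply Measure.addHaar_submodule
    intro htop
    rcases eq_or_ne (α + β) 0 with hab | hab
    · have hmem : Complex.I ∈ LinearMap.ker L := htop ▸ Submodule.mem_top
      rw [LinearMap.mem_ker, hL, Complex.conj_I] at hmem
      have hβ : β = -α := by linear_combination hab
      rw [hβ] at hmem
      have : (2 * α) * Complex.I = 0 := by linear_combination hmem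
      rcases mul_eq_zero.mp this with h' | h'
      · exact hα (by linear_combination h' / 2)
      · exact Complex.I_ne_zero h'
    · have hmem : (1 : ℂ) ∈ LinearMap.ker L := htop ▸ Submodule.mem_top
      rw [LinearMap.mem_ker, hL] at hmem
      simp only [mul_one, map_one] at hmem
      exact hab hmem
  · rw [Set.not_nonempty_iff_eq_empty.mp hne]
    simp

variable (N : ℕ) [NeZero N]

lemma measurable_Cfun (a b : ZMod N) : Measurable (fun g : ZMod N → ℂ => Cfun N g a b) := by
  unfold Cfun
  apply Finset.measurable_sum
  intro j _
  exact (((measurable_pi_apply j).mul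
    (Complex.continuous_conj.measurable.comp (measurable_pi_apply (j + b)))).mul measurable_const)

lemma null_Cfun (a b : ZMod N) : volume {g : ZMod N → ℂ | Cfun N g a b = 0} = 0 := by
  classical
  have hSmeas : MeasurableSet {g : ZMod N → ℂ | Cfun N g a b = 0} :=
    (measurable_Cfun N a b) (measurableSet_singleton 0)
  rcases eq_or_ne b 0 with rfl | hb
  · -- b = 0 : slices are circles
    apply null_of_null_slices (0 : ZMod N) hSmeas
    intro g
    set c : ℂ := ∑ j ∈ Finset.univ.erase (0 : ZMod N),
      g j * conj (g (j + 0)) * zchar N (-(j * a)) with hc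
    have hsub : {z : ℂ | Function.update g 0 z ∈ {g : ZMod N → ℂ | Cfun N g a 0 = 0}}
        ⊆ Metric.sphere (0 : ℂ) (Real.sqrt ((-c).re)) := by
      intro z hz
      have hz' : Cfun N (Function.update g 0 z) a 0 = 0 := hz
      rw [Cfun, ← Finset.add_sum_erase _ _ (Finset.mem_univ (0 : ZMod N))] at hz'
      have hrest : ∑ j ∈ Finset.univ.erase (0 : ZMod N),
          Function.update g 0 z j * conj (Function.update g 0 z (j + 0)) * zchar N (-(j * a)) = c := by
        refine Finset.sum_congr rfl fun j hj => ?_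
        have hj0 : j ≠ 0 := Finset.ne_of_mem_erase hj
        rw [Function.update_of_ne hj0, Function.update_of_ne (by simpa using hj0)]
      rw [hrest] at hz'
      rw [show ((0 : ZMod N) + (0 : ZMod N)) = 0 by norm_num] at hz'
      simp only [add_zero, zero_add, Function.update_self, zero_mul, neg_zero, zchar_zero,
        mul_one] at hz'
      -- hz' : z * conj z + c = 0
      have hnc : (Complex.normSq z : ℂ) = -c := by
        rw [← Complex.mul_conj]
        linear_combination hz'
      have hre : Complex.normSq z = (-c).re := by
        have := congrArg Complex.re hnc
        simpa using this
      have : ‖z‖ = Real.sqrt ((-c).re) := by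
        rw [Complex.norm_def, hre]
      simpa [mem_sphere_iff_norm] using this
    exact measure_mono_null hsub (Measure.addHaar_sphere volume 0 _)
  · -- b ≠ 0
    have hZb : volume {g : ZMod N → ℂ | g b = 0} = 0 := by
      apply null_of_null_slices b
        (show MeasurableSet {g : ZMod N → ℂ | g b = 0} from
          (measurable_pi_apply b) (measurableSet_singleton 0))
      intro g
      have : {z : ℂ | Function.update g b z ∈ {g : ZMod N → ℂ | g b = 0}} = {0} := by
        ext z
        simp [Function.update_self]
      rw [this]
      exact measure_singleton 0
    have hsplit : {g : ZMod N → ℂ | Cfun N g a b = 0}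
        ⊆ {g : ZMod N → ℂ | g b = 0} ∪ {g : ZMod N → ℂ | Cfun N g a b = 0 ∧ g b ≠ 0} := by
      intro g hg
      by_cases h' : g b = 0
      · exact Or.inl h'
      · exact Or.inr ⟨hg, h'⟩
    refine measure_mono_null hsplit (measure_union_null hZb ?_)
    have hSmeas2 : MeasurableSet {g : ZMod N → ℂ | Cfun N g a b = 0 ∧ g b ≠ 0} := by
      refine hSmeas.inter ?_
      exact ((measurable_pi_apply b) (measurableSet_singleton 0)).compl
    apply null_of_null_slices (0 : ZMod N) hSmeas2
    intro g
    have hub : ∀ z : ℂ, Function.update g 0 z b = g b := fun z => Function.update_of_ne hb _ _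
    by_cases hgb : g b = 0
    · have : {z : ℂ | Function.update g 0 z ∈
          {g : ZMod N → ℂ | Cfun N g a b = 0 ∧ g b ≠ 0}} = ∅ := by
        ext z
        simp only [Set.mem_setOf_eq, Set.mem_empty_iff_false, iff_false, not_and, ne_eq, not_not]
        intro _
        rw [hub z]
        exact hgb
      rw [this]
      simp
    · -- main case : affine equation in z with α = conj (g b) ≠ 0
      have hnb : (-b : ZMod N) ≠ 0 := neg_ne_zero.mpr hb
      set rest : ℂ := ∑ j ∈ (Finset.univ.erase (0 : ZMod N)).erase (-b),
        g j * conj (g (j + b)) * zchar N (-(j * a)) with hrest_def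
      have hexpand : ∀ z : ℂ, Cfun N (Function.update g 0 z) a b
          = conj (g b) * z + (g (-b) * zchar N (b * a)) * conj z + rest := by
        intro z
        rw [Cfun, ← Finset.add_sum_erase _ _ (Finset.mem_univ (0 : ZMod N)),
          ← Finset.add_sum_erase _ _ (Finset.mem_erase.mpr ⟨hnb, Finset.mem_univ _⟩)]
        have h1 : Function.update g 0 z 0 * conj (Function.update g 0 z (0 + b)) *
            zchar N (-(0 * a)) = conj (g b) * z := by
          rw [Function.update_self, zero_add, Function.update_of_ne hb]
          simp [zchar_zero]
          ring
        have h2 : Function.update g 0 z (-b) * conj (Function.update g 0 z (-b + b)) *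
            zchar N (-(-b * a)) = (g (-b) * zchar N (b * a)) * conj z := by
          rw [Function.update_of_ne hnb, show (-b + b : ZMod N) = 0 by ring,
            Function.update_self, show (-(-b * a) : ZMod N) = b * a by ring]
          ring
        have h3 : ∑ j ∈ (Finset.univ.erase (0 : ZMod N)).erase (-b),
            Function.update g 0 z j * conj (Function.update g 0 z (j + b)) *
              zchar N (-(j * a)) = rest := by
          refine Finset.sum_congr rfl fun j hj => ?_
          have hj1 : j ≠ -b := (Finset.mem_erase.mp hj).1
          have hj2 : j ≠ 0 := Finset.ne_of_mem_erase (Finset.mem_erase.mp hj).2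
          have hjb : j + b ≠ 0 := fun h => hj1 (by linear_combination h)
          rw [Function.update_of_ne hj2, Function.update_of_ne hjb]
        rw [h1, h2, h3]
        ring
      have hsub : {z : ℂ | Function.update g 0 z ∈
            {g : ZMod N → ℂ | Cfun N g a b = 0 ∧ g b ≠ 0}}
          ⊆ {z : ℂ | conj (g b) * z + (g (-b) * zchar N (b * a)) * conj z + rest = 0} := by
        intro z hz
        have := hz.1
        rw [hexpand z] at this
        exact this
      exact measure_mono_null hsub
        (null_linear_slice (conj (g b)) (g (-b) * zchar N (b * a)) rest (by simpa using hgb))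

end meas

open MeasureTheory

/-- For almost every window `g ∈ ℂ^n` (i.e., outside a set of Lebesgue measure zero),
the Gabor system `(π(λ)g)_{λ ∈ (ℤ_n)²}` does phase retrieval: `x ↦ (|V_g x(λ)|²)_λ`
is injective modulo a global phase. -/
theorem gabor_phase_retrieval_generic_window (n : ℕ) [NeZero n] :
    ∃ E : Set (ZMod n → ℂ), volume E = 0 ∧
      ∀ g ∉ E, ∀ x y : ZMod n → ℂ,
        (∀ p : ZMod n × ZMod n, ‖dstft g x p‖ ^ 2 = ‖dstft g y p‖ ^ 2) →
        ∃ θ : ℝ, y = fun j => Complex.exp (θ * Complex.I) * x j := by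
  classical
  refine ⟨⋃ q : ZMod n × ZMod n, {g : ZMod n → ℂ | Cfun n g q.1 q.2 = 0}, ?_, ?_⟩
  · exact measure_iUnion_null fun q => null_Cfun n q.1 q.2
  · intro g hg x y h
    have hgood : ∀ a b : ZMod n, Cfun n g a b ≠ 0 := by
      intro a b h0
      exact hg (Set.mem_iUnion.mpr ⟨(a, b), h0⟩)
    exact good_window_pr n g hgood x y h
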